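/- Let V be a finite-dimensional real inner product space, R : V → V symmetric, ξ ∈ V nonzero, and t ∈ ℝ with 0 < t < 1, such that R(I−R)X = ⟨X,ξ⟩ξ for all X, Rξ = (1−t)ξ, and t(1−t) = ‖ξ‖². Then V = ker R ⊕ ker(I−R) ⊕ span{ξ} orthogonally, and the eigenvalues of R are among {0, 1−t, 1}, with span{ξ} contained in the eigenspace for 1−t. -/

import Mathlib

open scoped RealInnerProductSpace

/-- Structure of the tensor `R` at a point where `ξ ≠ 0`: `V` decomposes
orthogonally as `ker R ⊕ ker (I - R) ⊕ span {ξ}`, the eigenvalues of `R` are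
among `{0, 1 - t, 1}`, and `span {ξ}` lies in the eigenspace for `1 - t`. -/
theorem stmt_2 {V : Type*} [NormedAddCommGroup V] [InnerProductSpace ℝ V]
    [FiniteDimensional ℝ V]
    (R : V →ₗ[ℝ] V) (hR : R.IsSymmetric) (ξ : V) (hξ : ξ ≠ 0) (t : ℝ)
    (ht0 : 0 < t) (ht1 : t < 1)
    (h1 : ∀ X : V, R X - R (R X) = ⟪X, ξ⟫ • ξ)
    (h2 : R ξ = (1 - t) • ξ)
    (h3 : t * (1 - t) = ‖ξ‖ ^ 2) :
    (LinearMap.ker R ⊔ LinearMap.ker (LinearMap.id - R) ⊔ Submodule.span ℝ {ξ} = ⊤) ∧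
    (∀ x ∈ LinearMap.ker R, ∀ y ∈ LinearMap.ker (LinearMap.id - R), ⟪x, y⟫ = 0) ∧
    (∀ x ∈ LinearMap.ker R, ∀ y ∈ Submodule.span ℝ {ξ}, ⟪x, y⟫ = 0) ∧
    (∀ x ∈ LinearMap.ker (LinearMap.id - R), ∀ y ∈ Submodule.span ℝ {ξ}, ⟪x, y⟫ = 0) ∧
    (∀ μ : ℝ, Module.End.HasEigenvalue R μ → μ = 0 ∨ μ = 1 - t ∨ μ = 1) ∧
    (Submodule.span ℝ {ξ} ≤ Module.End.eigenspace R (1 - t)) := by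
  have hnξ : ‖ξ‖ ^ 2 ≠ 0 := pow_ne_zero 2 (norm_ne_zero_iff.mpr hξ)
  have ht' : (1 : ℝ) - t ≠ 0 := by linarith
  have hkerR_ξ : ∀ x ∈ LinearMap.ker R, ⟪x, ξ⟫ = 0 := by
    intro x hx
    have hx0 : R x = 0 := hx
    have : (1 - t) * ⟪x, ξ⟫ = 0 := by
      have := hR x ξ
      rw [hx0, h2, real_inner_smul_right, inner_zero_left] at this
      linarith
    exact (mul_eq_zero.mp this).resolve_left ht'
  have hker1 : ∀ y ∈ LinearMap.ker (LinearMap.id - R), R y = y := by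
    intro y hy
    have h := LinearMap.mem_ker.mp hy
    rw [LinearMap.sub_apply, LinearMap.id_apply, sub_eq_zero] at h
    exact h.symm
  have hker1_ξ : ∀ x ∈ LinearMap.ker (LinearMap.id - R), ⟪x, ξ⟫ = 0 := by
    intro x hx
    have hx1 : R x = x := hker1 x hx
    have := hR x ξ
    rw [hx1, h2, real_inner_smul_right] at this
    have ht0' : t ≠ 0 := ne_of_gt ht0
    have : t * ⟪x, ξ⟫ = 0 := by linarith [this]
    exact (mul_eq_zero.mp this).resolve_left ht0'
  refine ⟨?_, ?_, ?_, ?_, ?_, ?_⟩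
  · rw [eq_top_iff]
    intro X _
    set c : ℝ := ⟪X, ξ⟫ / ‖ξ‖ ^ 2 with hc
    set X' : V := X - c • ξ with hX'
    have hX'ξ : ⟪X', ξ⟫ = 0 := by
      rw [hX', inner_sub_left, real_inner_smul_left, real_inner_self_eq_norm_sq, hc]
      field_simp
      ring
    have h0 : R X' - R (R X') = 0 := by rw [h1 X', hX'ξ, zero_smul]
    have ha : X' - R X' ∈ LinearMap.ker R := by
      rw [LinearMap.mem_ker, map_sub]; exact h0
    have hb : R X' ∈ LinearMap.ker (LinearMap.id - R) := by
      rw [LinearMap.mem_ker, LinearMap.sub_apply, LinearMap.id_apply]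
      exact h0
    have hcm : c • ξ ∈ Submodule.span ℝ {ξ} :=
      Submodule.smul_mem _ _ (Submodule.mem_span_singleton_self ξ)
    have hXeq : X = (X' - R X') + R X' + c • ξ := by rw [hX']; abel
    rw [hXeq]
    exact Submodule.add_mem _
      (Submodule.add_mem _ (Submodule.mem_sup_left (Submodule.mem_sup_left ha))
        (Submodule.mem_sup_left (Submodule.mem_sup_right hb)))
      (Submodule.mem_sup_right hcm)
  · intro x hx y hy
    have hx0 : R x = 0 := hx
    have hy1 : R y = y := hker1 y hy
    calc ⟪x, y⟫ = ⟪x, R y⟫ := by rw [hy1]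
    _ = ⟪R x, y⟫ := (hR x y).symm
    _ = 0 := by rw [hx0, inner_zero_left]
  · intro x hx y hy
    obtain ⟨a, rfl⟩ := Submodule.mem_span_singleton.mp hy
    rw [real_inner_smul_right, hkerR_ξ x hx, mul_zero]
  · intro x hx y hy
    obtain ⟨a, rfl⟩ := Submodule.mem_span_singleton.mp hy
    rw [real_inner_smul_right, hker1_ξ x hx, mul_zero]
  · intro μ hμ
    obtain ⟨x, hx⟩ := hμ.exists_hasEigenvector
    have hxe : R x = μ • x := Module.End.mem_eigenspace_iff.mp hx.1
    have hx0 : x ≠ 0 := hx.2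
    have key : (μ - μ ^ 2) • x = ⟪x, ξ⟫ • ξ := by
      have := h1 x
      rw [hxe, map_smul, hxe, smul_smul] at this
      rw [← this, sub_smul, pow_two]
    by_cases hc : ⟪x, ξ⟫ = 0
    · have : (μ - μ ^ 2) • x = 0 := by rw [key, hc, zero_smul]
      have hμμ : μ - μ ^ 2 = 0 := by
        rcases smul_eq_zero.mp this with h | h
        · exact h
        · exact absurd h hx0
      have : μ * (1 - μ) = 0 := by ring_nf; ring_nf at hμμ; linarith
      rcases mul_eq_zero.mp this with h | h
      · exact Or.inl h
      · exact Or.inr (Or.inr (by linarith))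
    · have hμμ : μ - μ ^ 2 ≠ 0 := by
        intro h
        rw [h, zero_smul] at key
        exact hc (by
          rcases smul_eq_zero.mp key.symm with h' | h'
          · exact h'
          · exact absurd h' hξ)
      have hxξ : x = ((μ - μ ^ 2)⁻¹ * ⟪x, ξ⟫) • ξ := by
        rw [mul_smul, ← key, smul_smul, inv_mul_cancel₀ hμμ, one_smul]
      have : μ • x = (1 - t) • x := by
        rw [← hxe]
        conv_lhs => rw [hxξ]
        rw [map_smul, h2, smul_smul, mul_comm, ← smul_smul, ← hxξ]
      have : (μ - (1 - t)) • x = 0 := by rw [sub_smul, this, sub_self]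
      rcases smul_eq_zero.mp this with h | h
      · exact Or.inr (Or.inl (by linarith))
      · exact absurd h hx0
  · rw [Submodule.span_le, Set.singleton_subset_iff]
    exact Module.End.mem_eigenspace_iff.mpr h2
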